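/- In the decomposition P = X_g + μ·D₀ + λ·X_𝔥 of a planar quasi-homogeneous vector field P of type t̂ and degree k (with 𝔥 ≠ 0 quasi-homogeneous of degree r+|t̂|), the components are given explicitly by: g = (1/(k+|t̂|))·Proj_{Δ̂}(D₀ ∧ P), λ = (1/((r+|t̂|)𝔥))·Proj_{𝔥𝒫^{t̂}_{k−r}}(D₀ ∧ P), and μ = (1/(k+|t̂|))·(div(P) − ∇λ·X_𝔥). -/

import Mathlib

open MvPolynomial

def IsQH (t : Fin 2 → ℕ) (k : ℕ) (f : MvPolynomial (Fin 2) ℝ) : Prop :=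
  ∀ (ε : ℝ) (x : Fin 2 → ℝ),
    eval (fun i => ε ^ t i * x i) f = ε ^ k * eval x f

def IsQHVF (t : Fin 2 → ℕ) (k : ℕ) (F : Fin 2 → MvPolynomial (Fin 2) ℝ) : Prop :=
  ∀ j, IsQH t (k + t j) (F j)

noncomputable def ham (h : MvPolynomial (Fin 2) ℝ) : Fin 2 → MvPolynomial (Fin 2) ℝ :=
  ![-(pderiv 1 h), pderiv 0 h]

noncomputable def D0 (t : Fin 2 → ℕ) : Fin 2 → MvPolynomial (Fin 2) ℝ :=
  ![C ((t 0 : ℝ)) * X 0, C ((t 1 : ℝ)) * X 1]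

noncomputable def wedge (F G : Fin 2 → MvPolynomial (Fin 2) ℝ) : MvPolynomial (Fin 2) ℝ :=
  F 0 * G 1 - F 1 * G 0

noncomputable def divg (F : Fin 2 → MvPolynomial (Fin 2) ℝ) : MvPolynomial (Fin 2) ℝ :=
  pderiv 0 (F 0) + pderiv 1 (F 1)

/-- weighted-degree of every monomial in the support of a QH polynomial equals `m`. -/
lemma qh_weight {t : Fin 2 → ℕ} {m : ℕ} {f : MvPolynomial (Fin 2) ℝ}
    (hf : IsQH t m f) : ∀ d ∈ f.support, t 0 * d 0 + t 1 * d 1 = m := by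
  classical
  set Φ : MvPolynomial (Fin 2) ℝ →ₐ[ℝ] Polynomial (MvPolynomial (Fin 2) ℝ) :=
    aeval (fun i => Polynomial.X ^ t i * Polynomial.C (X i)) with hΦ
  have stepA : ∀ x : Fin 2 → ℝ,
      (Φ f).map (MvPolynomial.eval x) = Polynomial.X ^ m * Polynomial.C (eval x f) := by
    intro x
    apply Polynomial.funext
    intro ε
    have hcomp : (((Polynomial.evalRingHom ε).comp
        (Polynomial.mapRingHom (MvPolynomial.eval x))).comp Φ.toRingHom) =
        (MvPolynomial.eval (fun i => ε ^ t i * x i)) := by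
      apply MvPolynomial.ringHom_ext
      · intro r; simp [hΦ]
      · intro i
        simp only [RingHom.comp_apply, AlgHom.toRingHom_eq_coe, RingHom.coe_coe, hΦ, aeval_X,
          Polynomial.coe_mapRingHom, Polynomial.map_mul, Polynomial.map_pow, Polynomial.map_X,
          Polynomial.map_C, Polynomial.coe_evalRingHom, Polynomial.eval_mul, Polynomial.eval_pow,
          Polynomial.eval_X, Polynomial.eval_C, eval_X]
    have := congrArg (fun ψ => ψ f) hcomp
    simp only [RingHom.comp_apply] at this
    simp only [Polynomial.coe_evalRingHom, Polynomial.coe_mapRingHom,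
      AlgHom.toRingHom_eq_coe, RingHom.coe_coe] at this
    rw [this, hf ε x]
    simp only [Polynomial.eval_mul, Polynomial.eval_pow, Polynomial.eval_X, Polynomial.eval_C]
  have stepB : Φ f = Polynomial.monomial m f := by
    apply Polynomial.ext
    intro n
    apply MvPolynomial.funext
    intro x
    have h1 : eval x ((Φ f).coeff n) = ((Φ f).map (MvPolynomial.eval x)).coeff n := by
      simp [Polynomial.coeff_map]
    rw [h1, stepA x, mul_comm, Polynomial.C_mul_X_pow_eq_monomial,
      Polynomial.coeff_monomial, Polynomial.coeff_monomial]
    split <;> simp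
  have stepC : ∀ (d : Fin 2 →₀ ℕ) (c : ℝ),
      Φ (monomial d c) = Polynomial.monomial (t 0 * d 0 + t 1 * d 1) (monomial d c) := by
    intro d c
    have hmon : (monomial d (1:ℝ) : MvPolynomial (Fin 2) ℝ) = X 0 ^ d 0 * X 1 ^ d 1 := by
      rw [monomial_eq, Finsupp.prod_fintype _ _ (fun i => pow_zero _), Fin.prod_univ_two]
      simp
    have h1 : Φ (monomial d 1) = Polynomial.monomial (t 0 * d 0 + t 1 * d 1) (monomial d 1) := by
      conv_rhs => rw [hmon]
      rw [hmon, map_mul, map_pow, map_pow, hΦ, aeval_X, aeval_X,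
        ← Polynomial.C_mul_X_pow_eq_monomial, map_mul,
        mul_pow, mul_pow, ← pow_mul, ← pow_mul, ← map_pow, ← map_pow, pow_add]
      ring
    have h2 : (monomial d c : MvPolynomial (Fin 2) ℝ) = c • monomial d 1 := by
      rw [MvPolynomial.smul_monomial, smul_eq_mul, mul_one]
    rw [h2, map_smul, h1, ← Polynomial.smul_monomial]
  intro d hd
  by_contra hne
  have hsum : Φ f = ∑ e ∈ f.support, Polynomial.monomial (t 0 * e 0 + t 1 * e 1)
      (monomial e (coeff e f)) := by
    conv_lhs => rw [f.as_sum]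
    rw [map_sum]
    exact Finset.sum_congr rfl fun e _ => stepC e _
  have := stepB.symm.trans hsum
  have hco := congrArg (fun p => MvPolynomial.coeff d (p.coeff (t 0 * d 0 + t 1 * d 1))) this
  simp only [Polynomial.coeff_monomial, Polynomial.finset_sum_coeff,
    MvPolynomial.coeff_sum] at hco
  rw [if_neg (fun h => hne h.symm)] at hco
  rw [Finset.sum_eq_single d] at hco
  · rw [if_pos rfl, MvPolynomial.coeff_monomial, if_pos rfl] at hco
    exact (MvPolynomial.mem_support_iff.mp hd) hco.symm
  · intro e he hed
    split
    · rw [MvPolynomial.coeff_monomial, if_neg hed]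
    · simp
  · intro h; exact absurd hd h

lemma X_mul_pderiv_monomial (i : Fin 2) (d : Fin 2 →₀ ℕ) (c : ℝ) :
    X i * pderiv i (monomial d c) = monomial d (c * d i) := by
  rw [pderiv_monomial]
  by_cases h : d i = 0
  · simp [h]
  · have hsum : Finsupp.single i 1 + (d - Finsupp.single i 1) = d := by
      ext j
      rcases eq_or_ne j i with rfl | hj
      · simp only [Finsupp.add_apply, Finsupp.tsub_apply, Finsupp.single_eq_same]
        omega
      · simp [Finsupp.single_eq_of_ne' (Ne.symm hj), Finsupp.tsub_apply]
    rw [X, monomial_mul, one_mul, hsum]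

lemma euler {t : Fin 2 → ℕ} {m : ℕ} {f : MvPolynomial (Fin 2) ℝ} (hf : IsQH t m f) :
    C ((t 0 : ℝ)) * (X 0 * pderiv 0 f) + C ((t 1 : ℝ)) * (X 1 * pderiv 1 f)
      = C ((m : ℝ)) * f := by
  have hw := qh_weight hf
  rw [f.as_sum, map_sum (pderiv 0), map_sum (pderiv 1)]
  simp only [Finset.mul_sum]
  rw [← Finset.sum_add_distrib]
  refine Finset.sum_congr rfl fun d hd => ?_
  rw [X_mul_pderiv_monomial, X_mul_pderiv_monomial, C_mul_monomial, C_mul_monomial,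
    C_mul_monomial, ← map_add]
  congr 1
  have := hw d hd
  push_cast [← this]
  ring

lemma pderiv_comm' (i j : Fin 2) (f : MvPolynomial (Fin 2) ℝ) :
    pderiv i (pderiv j f) = pderiv j (pderiv i f) := by
  induction f using MvPolynomial.induction_on' with
  | add p q hp hq => simp [hp, hq]
  | monomial d c =>
      rcases eq_or_ne i j with rfl | hij
      · rfl
      · simp only [pderiv_monomial]
        rw [Finsupp.tsub_apply, Finsupp.tsub_apply,
          Finsupp.single_eq_of_ne' hij, Finsupp.single_eq_of_ne' (Ne.symm hij)]
        rw [tsub_right_comm]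
        congr 1
        simp only [tsub_zero]
        ring

/-- Explicit formulas for the components of the planar splitting
`P = X_g + μ·D₀ + λ·X_𝔥`: the `Δ̂`-component of `D₀ ∧ P` is `(k+|t̂|)·g`, its
`𝔥𝒫`-component is `(r+|t̂|)·λ·𝔥`, and `(k+|t̂|)·μ = div(P) − ∇λ·X_𝔥`. -/
theorem planar_splitting_formulas (t : Fin 2 → ℕ) (ht : ∀ i, 0 < t i) (r k : ℕ)
    (hrk : r ≤ k)
    (𝔥 : MvPolynomial (Fin 2) ℝ) (h𝔥 : IsQH t (r + t 0 + t 1) 𝔥) (h𝔥0 : 𝔥 ≠ 0)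
    (Δ : Submodule ℝ (MvPolynomial (Fin 2) ℝ))
    (hΔQH : ∀ g ∈ Δ, IsQH t (k + t 0 + t 1) g)
    (P : Fin 2 → MvPolynomial (Fin 2) ℝ) (hP : IsQHVF t k P)
    (g μ lam : MvPolynomial (Fin 2) ℝ)
    (hg : g ∈ Δ) (hμ : IsQH t k μ) (hlam : IsQH t (k - r) lam)
    (hdec : ∀ j, P j = ham g j + μ * D0 t j + lam * ham 𝔥 j) :
    wedge (D0 t) P =
        C (((k + t 0 + t 1 : ℕ) : ℝ)) * g + C (((r + t 0 + t 1 : ℕ) : ℝ)) * (lam * 𝔥) ∧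
    C (((k + t 0 + t 1 : ℕ) : ℝ)) * μ = divg P - ∑ i, pderiv i lam * ham 𝔥 i := by
  have eg := euler (hΔQH g hg)
  have eh := euler h𝔥
  have emu := euler hμ
  have e0 := hdec 0
  have e1 := hdec 1
  simp only [ham, D0, Matrix.cons_val_zero, Matrix.cons_val_one, Matrix.head_cons] at e0 e1
  constructor
  · simp only [wedge, D0, Matrix.cons_val_zero, Matrix.cons_val_one, Matrix.head_cons, e0, e1]
    linear_combination eg + lam * eh
  · have hck : (C (((k + t 0 + t 1 : ℕ) : ℝ)) : MvPolynomial (Fin 2) ℝ) =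
        C ((k : ℝ)) + C ((t 0 : ℝ)) + C ((t 1 : ℝ)) := by
      push_cast
      rw [map_add, map_add]
    have hcg := pderiv_comm' 0 1 g
    have hch := pderiv_comm' 0 1 𝔥
    rw [hck]
    simp only [divg, ham, Fin.sum_univ_two, Matrix.cons_val_zero, Matrix.cons_val_one,
      Matrix.head_cons, e0, e1, map_add, map_neg, pderiv_mul, pderiv_X_self, pderiv_C,
      pderiv_C_mul, pderiv_X_of_ne (show (0:Fin 2) ≠ 1 by decide),
      pderiv_X_of_ne (show (1:Fin 2) ≠ 0 by decide)]
    linear_combination -emu + hcg + lam * hch
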